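/- Let n ≥ 1 and let q, p ∈ ℝⁿ with q ≠ 0 and K(q,p) := ‖p‖²/2 - 1/‖q‖ < 0. Define φ = -√(-2K(q,p))·⟨q,p⟩, u = (√(-2K(q,p))·‖q‖·p, ‖p‖²‖q‖ - 1) ∈ ℝⁿ⁺¹, v = (-q/‖q‖ + ⟨q,p⟩·p, -√(-2K(q,p))·⟨q,p⟩) ∈ ℝⁿ⁺¹, and set r = (cos φ)·u + (sin φ)·v and s = (1/√(-2K(q,p)))·(-(sin φ)·u + (cos φ)·v). Then ‖r‖ = 1, ⟨r, s⟩ = 0, and ‖s‖² = -1/(2K(q,p)); in particular -1/(2‖s‖²) = K(q,p). -/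

import Mathlib

open RealInnerProductSpace

set_option maxHeartbeats 1000000 in
/-- The Ligon-Schaaf map `(q,p) ↦ (r,s)` lands in `T*Sⁿ` and transforms the
Kepler Hamiltonian `K` into the Delaunay Hamiltonian `-1/(2‖s‖²)`. -/
theorem ligonSchaaf_delaunay (n : ℕ) (hn : 1 ≤ n)
    (q p : EuclideanSpace ℝ (Fin n)) (hq : q ≠ 0)
    (hK : ‖p‖ ^ 2 / 2 - 1 / ‖q‖ < 0) :
    let K : ℝ := ‖p‖ ^ 2 / 2 - 1 / ‖q‖
    let φ : ℝ := -(Real.sqrt (-2 * K) * ⟪q, p⟫)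
    let u : WithLp 2 (EuclideanSpace ℝ (Fin n) × ℝ) :=
      (WithLp.equiv 2 (EuclideanSpace ℝ (Fin n) × ℝ)).symm
        ((Real.sqrt (-2 * K) * ‖q‖) • p, ‖p‖ ^ 2 * ‖q‖ - 1)
    let v : WithLp 2 (EuclideanSpace ℝ (Fin n) × ℝ) :=
      (WithLp.equiv 2 (EuclideanSpace ℝ (Fin n) × ℝ)).symm
        (-(‖q‖⁻¹ • q) + ⟪q, p⟫ • p, -(Real.sqrt (-2 * K) * ⟪q, p⟫))
    let r := Real.cos φ • u + Real.sin φ • v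
    let s := (Real.sqrt (-2 * K))⁻¹ • (-(Real.sin φ • u) + Real.cos φ • v)
    ‖r‖ = 1 ∧ ⟪r, s⟫ = 0 ∧ ‖s‖ ^ 2 = -1 / (2 * K) ∧ -1 / (2 * ‖s‖ ^ 2) = K := by
  intro K φ u v r s
  have hK0 : K < 0 := hK
  have hK0' : K ≠ 0 := ne_of_lt hK0
  have hq0 : (0:ℝ) < ‖q‖ := norm_pos_iff.mpr hq
  have hqne : ‖q‖ ≠ 0 := ne_of_gt hq0
  have hω2 : Real.sqrt (-2 * K) ^ 2 = -2 * K := Real.sq_sqrt (by linarith)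
  have hωpos : 0 < Real.sqrt (-2 * K) := Real.sqrt_pos.mpr (by linarith)
  have hqq : ⟪q, q⟫ = ‖q‖ ^ 2 := real_inner_self_eq_norm_sq q
  have hpp : ⟪p, p⟫ = ‖p‖ ^ 2 := real_inner_self_eq_norm_sq p
  have hqp : ⟪p, q⟫ = ⟪q, p⟫ := real_inner_comm q p
  have hKq' : ‖p‖ ^ 2 * ‖q‖ = 2 + 2 * K * ‖q‖ := by
    show ‖p‖ ^ 2 * ‖q‖ = 2 + 2 * (‖p‖ ^ 2 / 2 - 1 / ‖q‖) * ‖q‖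
    field_simp
    ring
  have hKinv : ‖p‖ ^ 2 = 2 * ‖q‖⁻¹ + 2 * K := by
    show ‖p‖ ^ 2 = 2 * ‖q‖⁻¹ + 2 * (‖p‖ ^ 2 / 2 - 1 / ‖q‖)
    field_simp
    ring
  have h1 : ‖q‖⁻¹ * (‖q‖⁻¹ * ‖q‖ ^ 2) = 1 := by
    field_simp
  -- inner products of u and v
  have huu : ⟪u, u⟫ = 1 := by
    simp only [u, WithLp.prod_inner_apply, WithLp.equiv_symm_apply, WithLp.ofLp_toLp,
      real_inner_smul_left, real_inner_smul_right, hpp, RCLike.inner_apply, conj_trivial]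
    linear_combination (‖q‖ ^ 2 * ‖p‖ ^ 2) * hω2 + (‖p‖ ^ 2 * ‖q‖) * hKq'
  have hvv : ⟪v, v⟫ = 1 := by
    simp only [v, WithLp.prod_inner_apply, WithLp.equiv_symm_apply, WithLp.ofLp_toLp,
      inner_add_left, inner_add_right, inner_neg_left, inner_neg_right,
      real_inner_smul_left, real_inner_smul_right, hpp, hqq, hqp,
      RCLike.inner_apply, conj_trivial]
    linear_combination h1 + (⟪q, p⟫ ^ 2) * hKinv + (⟪q, p⟫ ^ 2) * hω2
  have huv : ⟪u, v⟫ = 0 := by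
    simp only [u, v, WithLp.prod_inner_apply, WithLp.equiv_symm_apply, WithLp.ofLp_toLp,
      inner_add_left, inner_add_right, inner_neg_left, inner_neg_right,
      real_inner_smul_left, real_inner_smul_right, hpp, hqq, hqp,
      RCLike.inner_apply, conj_trivial]
    field_simp
    ring
  have hvu : ⟪v, u⟫ = 0 := by rw [real_inner_comm]; exact huv
  -- r and s
  have hrr : ⟪r, r⟫ = 1 := by
    simp only [r, inner_add_left, inner_add_right, real_inner_smul_left, real_inner_smul_right,
      huu, hvv, huv, hvu]
    linear_combination Real.sin_sq_add_cos_sq φ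
  have hrnorm : ‖r‖ = 1 := by
    have h2 : ‖r‖ ^ 2 = 1 := by rw [← real_inner_self_eq_norm_sq]; exact hrr
    rw [← Real.sqrt_sq (norm_nonneg r), h2, Real.sqrt_one]
  have hww : ⟪-(Real.sin φ • u) + Real.cos φ • v, -(Real.sin φ • u) + Real.cos φ • v⟫ = 1 := by
    simp only [inner_add_left, inner_add_right, inner_neg_left, inner_neg_right,
      real_inner_smul_left, real_inner_smul_right, huu, hvv, huv, hvu]
    linear_combination Real.sin_sq_add_cos_sq φ
  have hwnorm : ‖-(Real.sin φ • u) + Real.cos φ • v‖ = 1 := by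
    have h2 : ‖-(Real.sin φ • u) + Real.cos φ • v‖ ^ 2 = 1 := by
      rw [← real_inner_self_eq_norm_sq]; exact hww
    rw [← Real.sqrt_sq (norm_nonneg _), h2, Real.sqrt_one]
  have hsnorm' : ‖s‖ = (Real.sqrt (-2 * K))⁻¹ := by
    simp only [s]
    rw [norm_smul, hwnorm, mul_one, Real.norm_eq_abs, abs_of_pos (inv_pos.mpr hωpos)]
  have hrs : ⟪r, s⟫ = 0 := by
    simp only [r, s, inner_add_left, inner_add_right, inner_neg_left, inner_neg_right,
      real_inner_smul_left, real_inner_smul_right, huu, hvv, huv, hvu]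
    ring
  have hsnorm : ‖s‖ ^ 2 = -1 / (2 * K) := by
    rw [hsnorm', inv_pow, hω2]
    field_simp
  refine ⟨hrnorm, hrs, hsnorm, ?_⟩
  rw [hsnorm]
  field_simp
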